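/- Let λ ∈ {±1}^{2^d} be the Rudin–Shapiro Golay sequence of length 2^d, and for 1 ≤ l ≤ d−1 partition λ into 2^l consecutive segments λ₀,…,λ_{2^l−1}, each of length 2^{d−l}. Then each segment λ_i is itself a Golay sequence, and moreover λ_i ⊙ γ_{2^{d−l}} is a Golay sequence, where γ_{2q} ∈ {±1}^{2q} is the vector whose first q entries equal +1 and last q entries equal −1, and ⊙ denotes entrywise multiplication. -/

import Mathlib

open MeasureTheory ProbabilityTheory Matrix
open scoped BigOperators

noncomputable section

/-- Squared ℓ² norm of a complex vector. -/
def l2normSq {n : ℕ} (x : Fin n → ℂ) : ℝ := ∑ i, ‖x i‖ ^ 2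

/-- `x` has at most `s` nonzero entries. -/
def SparseLe {n : ℕ} (s : ℕ) (x : Fin n → ℂ) : Prop :=
  (Finset.univ.filter fun i => x i ≠ 0).card ≤ s

/-- The restricted isometry constant of order `s` of `A` is at most `δ`. -/
def RIPLe {m n : ℕ} (A : Matrix (Fin m) (Fin n) ℂ) (s : ℕ) (δ : ℝ) : Prop :=
  ∀ x : Fin n → ℂ, SparseLe s x →
    (1 - δ) * l2normSq x ≤ l2normSq (A.mulVec x) ∧
    l2normSq (A.mulVec x) ≤ (1 + δ) * l2normSq x

/-- The coherence of a matrix: the maximum absolute value of its entries. -/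
def coherence {m n : ℕ} (A : Matrix (Fin m) (Fin n) ℂ) : ℝ :=
  ⨆ j : Fin m, ⨆ k : Fin n, ‖A j k‖

/-- A unit-norm tight frame: `m ≤ n`, unit-norm columns, and `V Vᴴ = (n/m) I`. -/
def IsUTF {m n : ℕ} (V : Matrix (Fin m) (Fin n) ℂ) : Prop :=
  m ≤ n ∧ (∀ k, ∑ j, ‖V j k‖ ^ 2 = 1) ∧
    V * V.conjTranspose = ((n : ℂ) / (m : ℂ)) • 1

/-- A real random variable is `r`-subgaussian. -/
def IsSubgaussian {Ω : Type*} [MeasurableSpace Ω] (μ : Measure Ω) (r : ℝ) (X : Ω → ℝ) : Prop :=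
  ∀ t : ℝ, ∫ ω, Real.exp (t * X ω) ∂μ ≤ Real.exp (r ^ 2 * t ^ 2 / 2)

/-- A random vector with independent, zero-mean, unit-variance, `r`-subgaussian entries. -/
def IsSubgaussianVec {Ω : Type*} [MeasurableSpace Ω] (μ : Measure Ω) (r : ℝ) {n : ℕ}
    (ξ : Ω → Fin n → ℝ) : Prop :=
  iIndepFun (fun i ω => ξ ω i) μ ∧
  (∀ i, Measurable fun ω => ξ ω i) ∧
  (∀ i, ∫ ω, ξ ω i ∂μ = 0) ∧
  (∀ i, ∫ ω, (ξ ω i) ^ 2 ∂μ = 1) ∧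
  (∀ i, IsSubgaussian μ r fun ω => ξ ω i)

/-- A Rademacher random vector: independent entries, uniform on `{1, -1}`. -/
def IsRademacherVec {Ω : Type*} [MeasurableSpace Ω] (μ : Measure Ω) {n : ℕ}
    (ξ : Ω → Fin n → ℝ) : Prop :=
  iIndepFun (fun i ω => ξ ω i) μ ∧
  (∀ i, Measurable fun ω => ξ ω i) ∧
  (∀ i, μ {ω | ξ ω i = 1} = 1/2 ∧ μ {ω | ξ ω i = -1} = 1/2)

/-- The normalized `n × n` DFT matrix. -/
def DFT (n : ℕ) : Matrix (Fin n) (Fin n) ℂ :=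
  fun j k => ((1 / Real.sqrt n : ℝ) : ℂ) *
    Complex.exp (-2 * Real.pi * Complex.I * ((j : ℕ) : ℂ) * ((k : ℕ) : ℂ) / (n : ℂ))

/-- The failure probability `n ^ (−(log n)(log s)²)`. -/
def failProb (n s : ℕ) : ℝ := (n : ℝ) ^ (-(Real.log n) * (Real.log s) ^ 2)

/-- `a` is a Golay sequence: a `±1` sequence admitting a complementary `±1` sequence `b`
with `|A(z)|² + |B(z)|² = 2n` on the unit circle. -/
def IsGolay {n : ℕ} (a : Fin n → ℝ) : Prop :=
  (∀ k, a k = 1 ∨ a k = -1) ∧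
  ∃ b : Fin n → ℝ, (∀ k, b k = 1 ∨ b k = -1) ∧
    ∀ z : ℂ, ‖z‖ = 1 →
      ‖∑ k, (a k : ℂ) * z ^ (k : ℕ)‖ ^ 2 +
      ‖∑ k, (b k : ℂ) * z ^ (k : ℕ)‖ ^ 2 = 2 * n

/-- The matrix `P₁ = I_m ⊗ 1_qᵀ`. -/
def P1 (m q : ℕ) : Matrix (Fin m) (Fin (m * q)) ℂ :=
  fun j k => if (k : ℕ) / q = (j : ℕ) then 1 else 0

/-- The Rudin–Shapiro iterative process: `(rsPQ d).1` and `(rsPQ d).2` are the complementary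
pair `(P_d, Q_d)` of `±1` sequences of length `2^d` (indexed by `ℕ`, junk values beyond). -/
def rsPQ : ℕ → (ℕ → ℤ) × (ℕ → ℤ)
  | 0 => (fun _ => 1, fun _ => 1)
  | d + 1 =>
      ((fun k => if k < 2 ^ d then (rsPQ d).1 k else (rsPQ d).2 (k - 2 ^ d)),
       (fun k => if k < 2 ^ d then (rsPQ d).1 k else -((rsPQ d).2 (k - 2 ^ d))))

/-- The Rudin–Shapiro (Golay) sequence of length `2^d`. -/
def rudinShapiro (d : ℕ) : ℕ → ℤ := (rsPQ d).1

private lemma sum_range_split (n p : ℕ) (f : ℕ → ℂ) :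
    ∑ k ∈ Finset.range (n + p), f k
      = ∑ k ∈ Finset.range n, f k + ∑ k ∈ Finset.range p, f (n + k) := by
  rw [Finset.range_eq_Ico, ← Finset.sum_Ico_consecutive _ (Nat.zero_le n) (Nat.le_add_right n p)]
  congr 1
  rw [Finset.sum_Ico_eq_sum_range]
  simp
  simp [Finset.sum_Ico_eq_sum_range]

private lemma parallelogram (a b : ℂ) :
    ‖a + b‖ ^ 2 + ‖a - b‖ ^ 2
      = 2 * (‖a‖ ^ 2 + ‖b‖ ^ 2) := by
  simp only [Complex.sq_norm, Complex.normSq_apply, Complex.add_re, Complex.add_im,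
    Complex.sub_re, Complex.sub_im]
  ring

private lemma rsEntries (m : ℕ) : ∀ k,
    ((rsPQ m).1 k = 1 ∨ (rsPQ m).1 k = -1) ∧ ((rsPQ m).2 k = 1 ∨ (rsPQ m).2 k = -1) := by
  induction m with
  | zero => intro k; simp [rsPQ]
  | succ m ih =>
    intro k
    by_cases h : k < 2 ^ m
    · simpa [rsPQ, h] using (ih k).1
    · have h2 := (ih (k - 2 ^ m)).2
      constructor
      · simpa [rsPQ, h] using h2
      · rcases h2 with h1 | h1 <;> simp [rsPQ, h, h1]

private lemma rsSumRec1 (m : ℕ) (z : ℂ) :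
    (∑ k ∈ Finset.range (2 ^ (m + 1)), ((rsPQ (m + 1)).1 k : ℂ) * z ^ k)
      = (∑ k ∈ Finset.range (2 ^ m), ((rsPQ m).1 k : ℂ) * z ^ k) +
        z ^ (2 ^ m) * ∑ k ∈ Finset.range (2 ^ m), ((rsPQ m).2 k : ℂ) * z ^ k := by
  have h2 : (2 : ℕ) ^ (m + 1) = 2 ^ m + 2 ^ m := by ring
  rw [h2, sum_range_split]
  congr 1
  · exact Finset.sum_congr rfl fun k hk => by
      have hk' : k < 2 ^ m := Finset.mem_range.mp hk
      simp [rsPQ, hk']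
  · rw [Finset.mul_sum]
    refine Finset.sum_congr rfl fun k hk => ?_
    have h1 : ¬ (2 ^ m + k < 2 ^ m) := by omega
    simp [rsPQ, h1, pow_add]
    ring

private lemma rsSumRec2 (m : ℕ) (z : ℂ) :
    (∑ k ∈ Finset.range (2 ^ (m + 1)), ((rsPQ (m + 1)).2 k : ℂ) * z ^ k)
      = (∑ k ∈ Finset.range (2 ^ m), ((rsPQ m).1 k : ℂ) * z ^ k) -
        z ^ (2 ^ m) * ∑ k ∈ Finset.range (2 ^ m), ((rsPQ m).2 k : ℂ) * z ^ k := by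
  have h2 : (2 : ℕ) ^ (m + 1) = 2 ^ m + 2 ^ m := by ring
  rw [h2, sum_range_split, sub_eq_add_neg]
  congr 1
  · exact Finset.sum_congr rfl fun k hk => by
      have hk' : k < 2 ^ m := Finset.mem_range.mp hk
      simp [rsPQ, hk']
  · have h1 : ∀ k, ((rsPQ (m + 1)).2 (2 ^ m + k) : ℂ) = -((rsPQ m).2 k : ℂ) := by
      intro k
      have hn : ¬ (2 ^ m + k < 2 ^ m) := by omega
      simp [rsPQ, hn]
    calc ∑ k ∈ Finset.range (2 ^ m), ((rsPQ (m + 1)).2 (2 ^ m + k) : ℂ) * z ^ (2 ^ m + k)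
        = ∑ k ∈ Finset.range (2 ^ m), -(z ^ (2 ^ m) * (((rsPQ m).2 k : ℂ) * z ^ k)) := by
          refine Finset.sum_congr rfl fun k _ => ?_
          rw [h1 k, pow_add]; ring
      _ = -(z ^ (2 ^ m) * ∑ k ∈ Finset.range (2 ^ m), ((rsPQ m).2 k : ℂ) * z ^ k) := by
          rw [Finset.mul_sum]; simp

private lemma rsKey (m : ℕ) (z : ℂ) (hz : ‖z‖ = 1) :
    ‖∑ k ∈ Finset.range (2 ^ m), ((rsPQ m).1 k : ℂ) * z ^ k‖ ^ 2 +
    ‖∑ k ∈ Finset.range (2 ^ m), ((rsPQ m).2 k : ℂ) * z ^ k‖ ^ 2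
      = 2 ^ (m + 1) := by
  induction m with
  | zero => norm_num [rsPQ]
  | succ m ih =>
    rw [rsSumRec1 m z, rsSumRec2 m z, parallelogram, norm_mul, norm_pow, hz, one_pow, one_mul, ih]
    ring

private lemma rsSeg (l m : ℕ) : ∀ i, i < 2 ^ l → ∀ f : ℕ → ℤ,
    (f = (rsPQ (l + m)).1 ∨ f = (rsPQ (l + m)).2) →
    ∃ ε : ℤ, (ε = 1 ∨ ε = -1) ∧
      ((∀ k, k < 2 ^ m → f (i * 2 ^ m + k) = ε * (rsPQ m).1 k) ∨
       (∀ k, k < 2 ^ m → f (i * 2 ^ m + k) = ε * (rsPQ m).2 k)) := by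
  induction l with
  | zero =>
    intro i hi f hf
    have hi0 : i = 0 := by omega
    subst hi0
    rcases hf with rfl | rfl
    · exact ⟨1, Or.inl rfl, Or.inl fun k _ => by simp [Nat.zero_add]⟩
    · exact ⟨1, Or.inl rfl, Or.inr fun k _ => by simp [Nat.zero_add]⟩
  | succ l ih =>
    intro i hi f hf
    have hlm : l + 1 + m = (l + m) + 1 := by omega
    by_cases h : i < 2 ^ l
    · have hidx : ∀ k, k < 2 ^ m → i * 2 ^ m + k < 2 ^ (l + m) := by
        intro k hk
        have h1 : (i + 1) * 2 ^ m = i * 2 ^ m + 2 ^ m := by ring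
        have h2 : (i + 1) * 2 ^ m ≤ 2 ^ l * 2 ^ m := Nat.mul_le_mul_right _ h
        have h3 : (2 : ℕ) ^ l * 2 ^ m = 2 ^ (l + m) := (pow_add 2 l m).symm
        omega
      have hval : ∀ k, k < 2 ^ m → f (i * 2 ^ m + k) = (rsPQ (l + m)).1 (i * 2 ^ m + k) := by
        intro k hk
        rcases hf with rfl | rfl <;> simp [hlm, rsPQ, hidx k hk]
      obtain ⟨ε, hε, hc⟩ := ih i h (rsPQ (l + m)).1 (Or.inl rfl)
      refine ⟨ε, hε, ?_⟩
      rcases hc with hc | hc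
      · exact Or.inl fun k hk => (hval k hk).trans (hc k hk)
      · exact Or.inr fun k hk => (hval k hk).trans (hc k hk)
    · set j := i - 2 ^ l with hj
      have hj2 : j < 2 ^ l := by
        have h4 : (2 : ℕ) ^ (l + 1) = 2 ^ l + 2 ^ l := by ring
        omega
      have hidx : ∀ k, k < 2 ^ m → i * 2 ^ m + k = 2 ^ (l + m) + (j * 2 ^ m + k) := by
        intro k hk
        have hij : i = 2 ^ l + j := by omega
        have h5 : i * 2 ^ m = 2 ^ l * 2 ^ m + j * 2 ^ m := by rw [hij, Nat.add_mul]
        have h3 : (2 : ℕ) ^ l * 2 ^ m = 2 ^ (l + m) := (pow_add 2 l m).symm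
        omega
      have hnlt : ∀ k, k < 2 ^ m → ¬ (2 ^ (l + m) + (j * 2 ^ m + k) < 2 ^ (l + m)) :=
        fun k hk => by omega
      obtain ⟨ε, hε, hc⟩ := ih j hj2 (rsPQ (l + m)).2 (Or.inr rfl)
      rcases hf with rfl | rfl
      · refine ⟨ε, hε, ?_⟩
        have hval : ∀ k, k < 2 ^ m →
            (rsPQ (l + 1 + m)).1 (i * 2 ^ m + k) = (rsPQ (l + m)).2 (j * 2 ^ m + k) := by
          intro k hk
          rw [hidx k hk]
          simp [hlm, rsPQ, hnlt k hk]
        rcases hc with hc | hc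
        · exact Or.inl fun k hk => (hval k hk).trans (hc k hk)
        · exact Or.inr fun k hk => (hval k hk).trans (hc k hk)
      · refine ⟨-ε, by rcases hε with h' | h' <;> simp [h'], ?_⟩
        have hval : ∀ k, k < 2 ^ m →
            (rsPQ (l + 1 + m)).2 (i * 2 ^ m + k) = -((rsPQ (l + m)).2 (j * 2 ^ m + k)) := by
          intro k hk
          rw [hidx k hk]
          simp [hlm, rsPQ, hnlt k hk]
        rcases hc with hc | hc
        · exact Or.inl fun k hk => by rw [hval k hk, hc k hk]; ring
        · exact Or.inr fun k hk => by rw [hval k hk, hc k hk]; ring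

private lemma rsSwap (m k : ℕ) :
    (rsPQ (m + 1)).2 k = (rsPQ (m + 1)).1 k * (if k < 2 ^ m then 1 else -1) ∧
    (rsPQ (m + 1)).1 k = (rsPQ (m + 1)).2 k * (if k < 2 ^ m then 1 else -1) := by
  by_cases h : k < 2 ^ m <;> simp [rsPQ, h]

private lemma sumEq (m : ℕ) (ε : ℤ) (g : ℕ → ℤ) (a : Fin (2 ^ m) → ℝ)
    (ha : ∀ k : Fin (2 ^ m), a k = (ε : ℝ) * (g (k : ℕ) : ℝ)) (z : ℂ) :
    (∑ k : Fin (2 ^ m), (a k : ℂ) * z ^ (k : ℕ))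
      = (ε : ℂ) * ∑ k ∈ Finset.range (2 ^ m), (g k : ℂ) * z ^ k := by
  have : (∑ k : Fin (2 ^ m), (a k : ℂ) * z ^ (k : ℕ))
      = ∑ k : Fin (2 ^ m), (ε : ℂ) * ((g (k : ℕ) : ℂ) * z ^ (k : ℕ)) := by
    refine Finset.sum_congr rfl fun k _ => ?_
    rw [ha k]; push_cast; ring
  rw [this, ← Finset.mul_sum, Fin.sum_univ_eq_sum_range (fun k => (g k : ℂ) * z ^ k)]


private lemma absEps (ε : ℤ) (hε : ε = 1 ∨ ε = -1) (w : ℂ) :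
    ‖(ε : ℂ) * w‖ = ‖w‖ := by
  rcases hε with rfl | rfl <;> simp

private lemma golay_of_seg (m : ℕ) (ε : ℤ) (hε : ε = 1 ∨ ε = -1) (a : Fin (2 ^ m) → ℝ)
    (ha : (∀ k : Fin (2 ^ m), a k = (ε : ℝ) * ((rsPQ m).1 (k : ℕ) : ℝ)) ∨
          (∀ k : Fin (2 ^ m), a k = (ε : ℝ) * ((rsPQ m).2 (k : ℕ) : ℝ))) :
    IsGolay a := by
  constructor
  · intro k
    rcases ha with h | h
    · rw [h k]
      rcases hε with rfl | rfl <;> rcases (rsEntries m (k : ℕ)).1 with h1 | h1 <;> simp [h1]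
    · rw [h k]
      rcases hε with rfl | rfl <;> rcases (rsEntries m (k : ℕ)).2 with h1 | h1 <;> simp [h1]
  · rcases ha with h | h
    · refine ⟨fun k => (ε : ℝ) * ((rsPQ m).2 (k : ℕ) : ℝ), ?_, ?_⟩
      · intro k
        rcases hε with rfl | rfl <;> rcases (rsEntries m (k : ℕ)).2 with h1 | h1 <;> simp [h1]
      · intro z hz
        rw [sumEq m ε _ a h z, sumEq m ε ((rsPQ m).2) _ (fun k => rfl) z,
          absEps ε hε, absEps ε hε, rsKey m z hz]
        push_cast; ring
    · refine ⟨fun k => (ε : ℝ) * ((rsPQ m).1 (k : ℕ) : ℝ), ?_, ?_⟩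
      · intro k
        rcases hε with rfl | rfl <;> rcases (rsEntries m (k : ℕ)).1 with h1 | h1 <;> simp [h1]
      · intro z hz
        rw [sumEq m ε _ a h z, sumEq m ε ((rsPQ m).1) _ (fun k => rfl) z,
          absEps ε hε, absEps ε hε, add_comm, rsKey m z hz]
        push_cast; ring


/-- each length-`2^{d−l}` segment of the Rudin–Shapiro sequence of length
`2^d` is a Golay sequence, and so is its entrywise product with `γ = (1,…,1,−1,…,−1)`. -/
theorem rudin_shapiro_segments_golay (d l : ℕ) (hl1 : 1 ≤ l) (hl2 : l ≤ d - 1)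
    (i : ℕ) (hi : i < 2 ^ l) :
    IsGolay (fun k : Fin (2 ^ (d - l)) =>
      ((rudinShapiro d (i * 2 ^ (d - l) + (k : ℕ)) : ℤ) : ℝ)) ∧
    IsGolay (fun k : Fin (2 ^ (d - l)) =>
      ((rudinShapiro d (i * 2 ^ (d - l) + (k : ℕ)) : ℤ) : ℝ) *
        (if (k : ℕ) < 2 ^ (d - l - 1) then 1 else -1)) := by
  obtain ⟨m', hE⟩ : ∃ m', d - l = m' + 1 := ⟨d - l - 1, by omega⟩
  have hd : d = l + (m' + 1) := by omega
  have h1 : d - l - 1 = m' := by omega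
  rw [hE]
  simp only [Nat.add_sub_cancel]
  obtain ⟨ε, hε, hc⟩ := rsSeg l (m' + 1) i hi (rsPQ (l + (m' + 1))).1 (Or.inl rfl)
  have hval : ∀ g : ℕ → ℤ,
      (∀ k, k < 2 ^ (m' + 1) → (rsPQ (l + (m' + 1))).1 (i * 2 ^ (m' + 1) + k) = ε * g k) →
      ∀ k : Fin (2 ^ (m' + 1)),
        ((rudinShapiro d (i * 2 ^ (m' + 1) + (k : ℕ)) : ℤ) : ℝ) = (ε : ℝ) * (g (k : ℕ) : ℝ) := by
    intro g hg k
    have h2 := hg (k : ℕ) k.isLt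
    rw [show rudinShapiro d = (rsPQ d).1 from rfl, hd]
    exact_mod_cast h2
  constructor
  · apply golay_of_seg (m' + 1) ε hε
    rcases hc with hc | hc
    · exact Or.inl (hval _ hc)
    · exact Or.inr (hval _ hc)
  · apply golay_of_seg (m' + 1) ε hε
    rcases hc with hc | hc
    · refine Or.inr fun k => ?_
      have h2 := hval _ hc k
      show ((rudinShapiro d (i * 2 ^ (m' + 1) + (k : ℕ)) : ℤ) : ℝ) *
          (if (k : ℕ) < 2 ^ m' then 1 else -1) = (ε : ℝ) * ((rsPQ (m' + 1)).2 (k : ℕ) : ℝ)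
      rw [h2]
      have h3 := (rsSwap m' (k : ℕ)).1
      by_cases hk : (k : ℕ) < 2 ^ m'
      · rw [if_pos hk] at h3; rw [if_pos hk, h3]; push_cast; ring
      · rw [if_neg hk] at h3; rw [if_neg hk, h3]; push_cast; ring
    · refine Or.inl fun k => ?_
      have h2 := hval _ hc k
      show ((rudinShapiro d (i * 2 ^ (m' + 1) + (k : ℕ)) : ℤ) : ℝ) *
          (if (k : ℕ) < 2 ^ m' then 1 else -1) = (ε : ℝ) * ((rsPQ (m' + 1)).1 (k : ℕ) : ℝ)
      rw [h2]
      have h3 := (rsSwap m' (k : ℕ)).2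
      by_cases hk : (k : ℕ) < 2 ^ m'
      · rw [if_pos hk] at h3; rw [if_pos hk, h3]; push_cast; ring
      · rw [if_neg hk] at h3; rw [if_neg hk, h3]; push_cast; ring
end
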